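/- Let R be an RMPC reachable process in which the parallel composition operator does not occur. Then the underlying CTMC M⟦R⟧ is a tree-like birth-death process: the subgraph of forward transitions forms a tree rooted at the initial state, and each forward transition is matched by a unique backward transition to its parent. -/

import Mathlib

namespace RMPC

/-- Syntax of RMPC processes: standard forward processes are those without
executed (key-decorated) prefixes; reversible processes may contain them. -/
inductive Proc : Type
  | nil : Proc
  | pre (a : ℕ) (lam : ℝ) (P : Proc) : Proc
  | preK (a : ℕ) (lam : ℝ) (i : ℕ) (P : Proc) : Proc
  | choice (P Q : Proc) : Proc
  | par (L : Set ℕ) (P Q : Proc) : Proc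

/-- Standard forward processes: no executed (keyed) prefix occurs. -/
def std : Proc → Prop
  | .nil => True
  | .pre _ _ P => std P
  | .preK _ _ _ _ => False
  | .choice P Q => std P ∧ std Q
  | .par _ P Q => std P ∧ std Q

/-- The set of communication keys occurring in a process. -/
def keys : Proc → Finset ℕ
  | .nil => ∅
  | .pre _ _ P => keys P
  | .preK _ _ i P => insert i (keys P)
  | .choice P Q => keys P ∪ keys Q
  | .par _ P Q => keys P ∪ keys Q

/-- Transition labels `<a,λ>[i]`: an action, a rate and a communication key. -/
structure Label where
  act : ℕ
  rate : ℝ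
  key : ℕ

/-- Forward transition relation of RMPC (rules Act1, Act2, Cho, Par, Coo). -/
inductive Fw : Proc → Label → Proc → Prop
  | act1 {a : ℕ} {lam : ℝ} (i : ℕ) {P : Proc} : std P →
      Fw (.pre a lam P) ⟨a, lam, i⟩ (.preK a lam i P)
  | act2 {a : ℕ} {lam : ℝ} {i : ℕ} {b : ℕ} {mu : ℝ} {j : ℕ} {R R' : Proc} :
      Fw R ⟨b, mu, j⟩ R' → j ≠ i →
      Fw (.preK a lam i R) ⟨b, mu, j⟩ (.preK a lam i R')
  | choL {R R' S : Proc} {ℓ : Label} : Fw R ℓ R' → std S →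
      Fw (.choice R S) ℓ (.choice R' S)
  | choR {R S S' : Proc} {ℓ : Label} : Fw S ℓ S' → std R →
      Fw (.choice R S) ℓ (.choice R S')
  | parL {L : Set ℕ} {R R' S : Proc} {a : ℕ} {lam : ℝ} {i : ℕ} :
      Fw R ⟨a, lam, i⟩ R' → a ∉ L → i ∉ keys S →
      Fw (.par L R S) ⟨a, lam, i⟩ (.par L R' S)
  | parR {L : Set ℕ} {R S S' : Proc} {a : ℕ} {lam : ℝ} {i : ℕ} :
      Fw S ⟨a, lam, i⟩ S' → a ∉ L → i ∉ keys R →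
      Fw (.par L R S) ⟨a, lam, i⟩ (.par L R S')
  | coo {L : Set ℕ} {R R' S S' : Proc} {a : ℕ} {lam mu : ℝ} {i : ℕ} :
      Fw R ⟨a, lam, i⟩ R' → Fw S ⟨a, mu, i⟩ S' → a ∈ L →
      Fw (.par L R S) ⟨a, lam * mu, i⟩ (.par L R' S')

/-- Backward transition relation of RMPC, parameterized by the function `bw`
assigning to each forward rate `λ` the corresponding backward rate `λ̄`
(rules Act1ʳ, Act2ʳ, Choʳ, Parʳ, Cooʳ). -/
inductive Bw (bw : ℝ → ℝ) : Proc → Label → Proc → Prop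
  | act1 {a : ℕ} {lam : ℝ} (i : ℕ) {P : Proc} : std P →
      Bw bw (.preK a lam i P) ⟨a, bw lam, i⟩ (.pre a lam P)
  | act2 {a : ℕ} {lam : ℝ} {i : ℕ} {b : ℕ} {mu : ℝ} {j : ℕ} {R R' : Proc} :
      Bw bw R ⟨b, mu, j⟩ R' → j ≠ i →
      Bw bw (.preK a lam i R) ⟨b, mu, j⟩ (.preK a lam i R')
  | choL {R R' S : Proc} {ℓ : Label} : Bw bw R ℓ R' → std S →
      Bw bw (.choice R S) ℓ (.choice R' S)
  | choR {R S S' : Proc} {ℓ : Label} : Bw bw S ℓ S' → std R →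
      Bw bw (.choice R S) ℓ (.choice R S')
  | parL {L : Set ℕ} {R R' S : Proc} {a : ℕ} {lam : ℝ} {i : ℕ} :
      Bw bw R ⟨a, lam, i⟩ R' → a ∉ L → i ∉ keys S →
      Bw bw (.par L R S) ⟨a, lam, i⟩ (.par L R' S)
  | parR {L : Set ℕ} {R S S' : Proc} {a : ℕ} {lam : ℝ} {i : ℕ} :
      Bw bw S ⟨a, lam, i⟩ S' → a ∉ L → i ∉ keys R →
      Bw bw (.par L R S) ⟨a, lam, i⟩ (.par L R S')
  | coo {L : Set ℕ} {R R' S S' : Proc} {a : ℕ} {lam mu : ℝ} {i : ℕ} :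
      Bw bw R ⟨a, lam, i⟩ R' → Bw bw S ⟨a, mu, i⟩ S' → a ∈ L →
      Bw bw (.par L R S) ⟨a, lam * mu, i⟩ (.par L R' S')

/-- The backward label `<a,λ̄>[i]` corresponding to a forward label `<a,λ>[i]`. -/
def bwLab (bw : ℝ → ℝ) (ℓ : Label) : Label := ⟨ℓ.act, bw ℓ.rate, ℓ.key⟩

/-- One forward step (any label). -/
def FwStep (R S : Proc) : Prop := ∃ ℓ, Fw R ℓ S

/-- Reachable processes: standard forward processes together with everything
derivable from them by finitely many forward transitions. -/
def Reachable (R : Proc) : Prop := ∃ P, std P ∧ Relation.ReflTransGen FwStep P R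

/-- Sequences of forward transitions labeled by a sequence of labels. -/
inductive FwSeq : Proc → List Label → Proc → Prop
  | nil (R : Proc) : FwSeq R [] R
  | cons {R R' S : Proc} {ℓ : Label} {σ : List Label} :
      Fw R ℓ R' → FwSeq R' σ S → FwSeq R (ℓ :: σ) S

/-- Sequences of backward transitions labeled by a sequence of labels. -/
inductive BwSeq (bw : ℝ → ℝ) : Proc → List Label → Proc → Prop
  | nil (R : Proc) : BwSeq bw R [] R
  | cons {R R' S : Proc} {ℓ : Label} {σ : List Label} :
      Bw bw R ℓ R' → BwSeq bw R' σ S → BwSeq bw R (ℓ :: σ) S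

/-- Direction of a transition. -/
inductive Dir : Type
  | fw : Dir
  | bk : Dir

/-- A transition in either direction. -/
def Trans (bw : ℝ → ℝ) : Dir → Proc → Label → Proc → Prop
  | .fw => Fw
  | .bk => Bw bw

/-- The causal set of a process until a key: the keys appearing syntactically
before (i.e., causing) the given key. -/
def cau : Proc → ℕ → Finset ℕ
  | .nil, _ => ∅
  | .pre _ _ _, _ => ∅
  | .preK _ _ j R, i => if j = i ∨ i ∉ keys R then ∅ else insert j (cau R i)
  | .choice R S, i => cau R i ∪ cau S i
  | .par _ R S, i => cau R i ∪ cau S i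

/-- Process contexts (processes with a hole). -/
inductive Ctx : Type
  | hole : Ctx
  | preK (a : ℕ) (lam : ℝ) (i : ℕ) (c : Ctx) : Ctx
  | choL (c : Ctx) (S : Proc) : Ctx
  | choR (R : Proc) (c : Ctx) : Ctx
  | parL (L : Set ℕ) (c : Ctx) (S : Proc) : Ctx
  | parR (L : Set ℕ) (R : Proc) (c : Ctx) : Ctx

/-- Plugging a process into the hole of a context. -/
def plug : Ctx → Proc → Proc
  | .hole, R => R
  | .preK a lam i c, R => .preK a lam i (plug c R)
  | .choL c S, R => .choice (plug c R) S
  | .choR Q c, R => .choice Q (plug c R)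
  | .parL L c S, R => .par L (plug c R) S
  | .parR L Q c, R => .par L Q (plug c R)

/-- Two coinitial forward transitions derive from the two branches of the same
choice operator (condition 2 of the definition of conflicting transitions). -/
def ChoiceConf (R : Proc) (ℓ₁ : Label) (S₁ : Proc) (ℓ₂ : Label) (S₂ : Proc) : Prop :=
  ∃ C P₁ P₂, R = plug C (.choice P₁ P₂) ∧
    ((∃ T₁ T₂, Fw P₁ ℓ₁ T₁ ∧ Fw P₂ ℓ₂ T₂ ∧
        S₁ = plug C (.choice T₁ P₂) ∧ S₂ = plug C (.choice P₁ T₂)) ∨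
     (∃ T₁ T₂, Fw P₂ ℓ₁ T₂ ∧ Fw P₁ ℓ₂ T₁ ∧
        S₁ = plug C (.choice P₁ T₂) ∧ S₂ = plug C (.choice T₁ P₂)))

/-- Conflict of two coinitial transitions from `R`:
(1) a forward and a backward transition where the backward one undoes a cause
of the forward one's key, or (2) two forward transitions arising from the two
branches of the same choice. -/
def Conflict (R : Proc) (d₁ : Dir) (ℓ₁ : Label) (S₁ : Proc)
    (d₂ : Dir) (ℓ₂ : Label) (S₂ : Proc) : Prop :=
  (d₁ = .fw ∧ d₂ = .bk ∧ ℓ₂.key ∈ cau S₁ ℓ₁.key) ∨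
  (d₁ = .bk ∧ d₂ = .fw ∧ ℓ₁.key ∈ cau S₂ ℓ₂.key) ∨
  (d₁ = .fw ∧ d₂ = .fw ∧ ChoiceConf R ℓ₁ S₁ ℓ₂ S₂)

/-- Two coinitial transitions are concurrent when they are not in conflict. -/
def Concurrent (R : Proc) (d₁ : Dir) (ℓ₁ : Label) (S₁ : Proc)
    (d₂ : Dir) (ℓ₂ : Label) (S₂ : Proc) : Prop :=
  ¬ Conflict R d₁ ℓ₁ S₁ d₂ ℓ₂ S₂ ∧ ¬ Conflict R d₂ ℓ₂ S₂ d₁ ℓ₁ S₁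


/-- Renaming of communication keys. -/
def rename (f : ℕ → ℕ) : Proc → Proc
  | .nil => .nil
  | .pre a lam P => .pre a lam (rename f P)
  | .preK a lam i P => .preK a lam (f i) (rename f P)
  | .choice P Q => .choice (rename f P) (rename f Q)
  | .par L P Q => .par L (rename f P) (rename f Q)

/-- The equivalence `≡_K`: processes that are syntactically identical up to a
consistent (bijective) renaming of keys in the same positions. -/
def KEq (R S : Proc) : Prop := ∃ f : ℕ ≃ ℕ, S = rename f R

/-- A transition of the underlying CTMC `M⟦R⟧` before quotienting: a forward
or backward transition with action `a` and rate `l`, the key being dropped. -/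
def Step (bw : ℝ → ℝ) (R : Proc) (a : ℕ) (l : ℝ) (S : Proc) : Prop :=
  ∃ i, Fw R ⟨a, l, i⟩ S ∨ Bw bw R ⟨a, l, i⟩ S

/-- A transition of `M⟦R⟧` in either direction, any label. -/
def AnyStep (bw : ℝ → ℝ) (R S : Proc) : Prop := ∃ a l, Step bw R a l S

/-- Reachability in `M⟦R⟧` (via forward and backward transitions). -/
def ReachAny (bw : ℝ → ℝ) : Proc → Proc → Prop :=
  Relation.ReflTransGen (AnyStep bw)

/-- The set of action-rate pairs labeling the transition bundles of `M⟦R⟧`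
from the class of `S` to the class of `S'`. -/
def KStepSet (bw : ℝ → ℝ) (S S' : Proc) : Set (ℕ × ℝ) :=
  {p | ∃ T T', KEq S T ∧ KEq S' T' ∧ Step bw T p.1 p.2 T'}

/-- The total rate in `M⟦R⟧` from the class of `S` to the class of `S'`. -/
noncomputable def q (bw : ℝ → ℝ) (S S' : Proc) : ℝ :=
  ∑ᶠ p ∈ KStepSet bw S S', p.2

/-- `F` is a finite set of representatives of the states of `M⟦R⟧`:
one representative per `≡_K`-class of processes reachable from `R`. -/
def RepSet (bw : ℝ → ℝ) (R : Proc) (F : Finset Proc) : Prop :=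
  (∀ T ∈ F, ReachAny bw R T) ∧
  (∀ S, ReachAny bw R S → ∃ T ∈ F, KEq S T) ∧
  (∀ T ∈ F, ∀ T' ∈ F, KEq T T' → T = T')

/-- A forward transition of `M⟦R⟧` between classes. -/
def FwKStep (S S' : Proc) : Prop := ∃ T T' ℓ, KEq S T ∧ KEq S' T' ∧ Fw T ℓ T'

/-- A backward transition of `M⟦R⟧` between classes. -/
def BwKStep (bw : ℝ → ℝ) (S S' : Proc) : Prop :=
  ∃ T T' ℓ, KEq S T ∧ KEq S' T' ∧ Bw bw T ℓ T'

/-- The parallel composition operator does not occur in the process. -/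
def noPar : Proc → Prop
  | .nil => True
  | .pre _ _ P => noPar P
  | .preK _ _ _ P => noPar P
  | .choice P Q => noPar P ∧ noPar Q
  | .par _ _ _ => False

/-! ### Auxiliary lemmas -/

section Aux

variable {bw : ℝ → ℝ}

lemma rename_id (R : Proc) : rename id R = R := by
  induction R <;> simp [rename, *]

lemma rename_comp (f g : ℕ → ℕ) (R : Proc) :
    rename g (rename f R) = rename (g ∘ f) R := by
  induction R <;> simp [rename, *]

lemma KEq.refl (R : Proc) : KEq R R := ⟨Equiv.refl ℕ, by simp [rename_id]⟩

lemma KEq.symm {R S : Proc} (h : KEq R S) : KEq S R := by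
  obtain ⟨f, rfl⟩ := h
  refine ⟨f.symm, ?_⟩
  rw [rename_comp]
  simp [rename_id]

lemma KEq.trans {R S T : Proc} (h1 : KEq R S) (h2 : KEq S T) : KEq R T := by
  obtain ⟨f, rfl⟩ := h1
  obtain ⟨g, rfl⟩ := h2
  exact ⟨f.trans g, by rw [rename_comp]; rfl⟩

lemma std_rename (f : ℕ → ℕ) (R : Proc) : std (rename f R) ↔ std R := by
  induction R <;> simp [rename, std, *]

lemma noPar_rename (f : ℕ → ℕ) (R : Proc) : noPar (rename f R) ↔ noPar R := by
  induction R <;> simp [rename, noPar, *]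

lemma bw_not_std {R ℓ S} (h : Bw bw R ℓ S) : ¬ std R := by
  induction h <;> simp_all [std]

lemma fw_not_std_target {R ℓ S} (h : Fw R ℓ S) : ¬ std S := by
  induction h <;> simp_all [std]

lemma fw_noPar {R ℓ S} (h : Fw R ℓ S) : noPar R ↔ noPar S := by
  induction h <;> simp_all [noPar]

lemma fw_bw {R ℓ S} (h : Fw R ℓ S) : noPar R → Bw bw S (bwLab bw ℓ) R := by
  induction h with
  | act1 i hstd => intro _; exact Bw.act1 i hstd
  | act2 h hne ih => intro hnp; exact Bw.act2 (ih hnp) hne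
  | choL h hstd ih => intro hnp; exact Bw.choL (ih hnp.1) hstd
  | choR h hstd ih => intro hnp; exact Bw.choR (ih hnp.2) hstd
  | parL h ha hk ih => intro hnp; exact hnp.elim
  | parR h ha hk ih => intro hnp; exact hnp.elim
  | coo h1 h2 ha ih1 ih2 => intro hnp; exact hnp.elim

lemma bw_fw {R ℓ S} (h : Bw bw R ℓ S) : ∃ l', Fw S ⟨ℓ.act, l', ℓ.key⟩ R := by
  induction h with
  | act1 i hstd => exact ⟨_, Fw.act1 i hstd⟩
  | act2 h hne ih => obtain ⟨l', h'⟩ := ih; exact ⟨l', Fw.act2 h' hne⟩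
  | choL h hstd ih => obtain ⟨l', h'⟩ := ih; exact ⟨l', Fw.choL h' hstd⟩
  | choR h hstd ih => obtain ⟨l', h'⟩ := ih; exact ⟨l', Fw.choR h' hstd⟩
  | parL h ha hk ih => obtain ⟨l', h'⟩ := ih; exact ⟨l', Fw.parL h' ha hk⟩
  | parR h ha hk ih => obtain ⟨l', h'⟩ := ih; exact ⟨l', Fw.parR h' ha hk⟩
  | coo h1 h2 ha ih1 ih2 =>
      obtain ⟨l1, h1'⟩ := ih1
      obtain ⟨l2, h2'⟩ := ih2
      exact ⟨l1 * l2, Fw.coo h1' h2' ha⟩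

lemma bw_noPar {R ℓ S} (h : Bw bw R ℓ S) : noPar R ↔ noPar S := by
  obtain ⟨l', hf⟩ := bw_fw h
  exact (fw_noPar hf).symm

lemma bw_rename (f : ℕ ≃ ℕ) {R ℓ S} (h : Bw bw R ℓ S) :
    noPar R → Bw bw (rename f R) ⟨ℓ.act, ℓ.rate, f ℓ.key⟩ (rename f S) := by
  induction h with
  | act1 i hstd => intro _; exact Bw.act1 (f i) ((std_rename f _).mpr hstd)
  | act2 h hne ih =>
      intro hnp
      exact Bw.act2 (ih hnp) (fun e => hne (f.injective e))
  | choL h hstd ih => intro hnp; exact Bw.choL (ih hnp.1) ((std_rename f _).mpr hstd)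
  | choR h hstd ih => intro hnp; exact Bw.choR (ih hnp.2) ((std_rename f _).mpr hstd)
  | parL h ha hk ih => intro hnp; exact hnp.elim
  | parR h ha hk ih => intro hnp; exact hnp.elim
  | coo h1 h2 ha ih1 ih2 => intro hnp; exact hnp.elim

lemma bw_det {R ℓ₁ S₁} (h1 : Bw bw R ℓ₁ S₁) :
    ∀ {ℓ₂ S₂}, noPar R → Bw bw R ℓ₂ S₂ → ℓ₁ = ℓ₂ ∧ S₁ = S₂ := by
  induction h1 with
  | act1 i hstd =>
      intro ℓ₂ S₂ hnp h2
      cases h2 with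
      | act1 _ _ => exact ⟨rfl, rfl⟩
      | act2 h _ => exact absurd hstd (bw_not_std h)
  | act2 h hne ih =>
      intro ℓ₂ S₂ hnp h2
      cases h2 with
      | act1 _ hstd => exact absurd hstd (bw_not_std h)
      | act2 h' hne' =>
          obtain ⟨hl, hp⟩ := ih hnp h'
          exact ⟨hl, by rw [hp]⟩
  | choL h hstd ih =>
      intro ℓ₂ S₂ hnp h2
      cases h2 with
      | choL h' hstd' =>
          obtain ⟨hl, hp⟩ := ih hnp.1 h'
          exact ⟨hl, by rw [hp]⟩
      | choR h' hstd' => exact absurd hstd' (bw_not_std h)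
  | choR h hstd ih =>
      intro ℓ₂ S₂ hnp h2
      cases h2 with
      | choL h' hstd' => exact absurd hstd (bw_not_std h')
      | choR h' hstd' =>
          obtain ⟨hl, hp⟩ := ih hnp.2 h'
          exact ⟨hl, by rw [hp]⟩
  | parL h ha hk ih => intro ℓ₂ S₂ hnp _; exact hnp.elim
  | parR h ha hk ih => intro ℓ₂ S₂ hnp _; exact hnp.elim
  | coo h1 h2 ha ih1 ih2 => intro ℓ₂ S₂ hnp _; exact hnp.elim

lemma chain_noPar {P S : Proc} (h : Relation.ReflTransGen FwStep P S) :
    noPar P ↔ noPar S := by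
  induction h with
  | refl => exact Iff.rfl
  | tail _ hstep ih =>
      obtain ⟨ℓ, hf⟩ := hstep
      exact ih.trans (fw_noPar hf)

lemma fwchain_reachAny {X Y : Proc} (h : Relation.ReflTransGen FwStep X Y) :
    ReachAny bw X Y := by
  induction h with
  | refl => exact Relation.ReflTransGen.refl
  | tail _ hstep ih =>
      obtain ⟨ℓ, hf⟩ := hstep
      exact ih.tail ⟨ℓ.act, ℓ.rate, ℓ.key, Or.inl hf⟩

lemma back_reachAny {X Y : Proc} (h : Relation.ReflTransGen FwStep X Y) (hnp : noPar Y) :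
    ReachAny bw Y X := by
  induction h with
  | refl => exact Relation.ReflTransGen.refl
  | tail hc hstep ih =>
      obtain ⟨ℓ, hf⟩ := hstep
      have hnp' : noPar _ := (fw_noPar hf).mpr hnp
      exact Relation.ReflTransGen.head
        ⟨ℓ.act, bw ℓ.rate, ℓ.key, Or.inr (fw_bw hf hnp')⟩ (ih hnp')

lemma back_on_path {P S : Proc} (hstd : std P) (hnp : noPar P)
    (hc : Relation.ReflTransGen FwStep P S) :
    ∀ {ℓ T}, Bw bw S ℓ T → Relation.ReflTransGen FwStep P T := by
  induction hc with
  | refl => intro ℓ T hb; exact absurd hstd (bw_not_std hb)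
  | @tail S' S hc' hstep ih =>
      intro ℓ T hb
      obtain ⟨ℓ₀, hf⟩ := hstep
      have hnpS' : noPar S' := (chain_noPar hc').mp hnp
      have hnpS : noPar S := (fw_noPar hf).mp hnpS'
      obtain ⟨-, rfl⟩ := bw_det (fw_bw hf hnpS') hnpS hb
      exact hc'

lemma reach_normalize {P R S : Proc} (hstd : std P) (hnp : noPar P)
    (hPR : Relation.ReflTransGen FwStep P R) (h : ReachAny bw R S) :
    Relation.ReflTransGen FwStep P S := by
  induction h with
  | refl => exact hPR
  | tail hc hstep ih =>
      obtain ⟨a, l, i, hf | hb⟩ := hstep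
      · exact ih.tail ⟨_, hf⟩
      · exact back_on_path hstd hnp ih hb

end Aux

/-- If parallel composition does not occur in `R`, then `M⟦R⟧` is a tree-like
birth-death process: forward transitions form a tree rooted at the initial
state, every non-root state has a unique parent, and each forward transition
is matched by a unique backward transition to the parent. -/
theorem tree_like_birth_death (bw : ℝ → ℝ) {R : Proc}
    (hR : Reachable R) (hnp : noPar R) :
    ∃ root : Proc, ReachAny bw R root ∧
      (∀ S, ReachAny bw R S → KEq root S ∨ Relation.ReflTransGen FwKStep root S) ∧
      (¬ ∃ S, ReachAny bw R S ∧ FwKStep S root) ∧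
      (∀ S, ReachAny bw R S → ¬ KEq S root →
        ∃ T, ReachAny bw R T ∧ FwKStep T S ∧
          ∀ T', ReachAny bw R T' → FwKStep T' S → KEq T' T) ∧
      (∀ S, ReachAny bw R S → ¬ KEq S root →
        ∃ T, ReachAny bw R T ∧ BwKStep bw S T ∧
          ∀ T', ReachAny bw R T' → BwKStep bw S T' → KEq T' T) ∧
      (∀ S T, ReachAny bw R S → ReachAny bw R T → (FwKStep T S ↔ BwKStep bw S T)) := by
  obtain ⟨P, hstd, hPR⟩ := hR
  have hnpP : noPar P := (chain_noPar hPR).mpr hnp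
  have hreach : ∀ S, ReachAny bw R S → Relation.ReflTransGen FwStep P S :=
    fun S h => reach_normalize hstd hnpP hPR h
  have hnpAll : ∀ S, ReachAny bw R S → noPar S :=
    fun S h => (chain_noPar (hreach S h)).mp hnpP
  have hanyP : ReachAny bw R P := back_reachAny hPR hnp
  have hanyOf : ∀ T, Relation.ReflTransGen FwStep P T → ReachAny bw R T :=
    fun T h => hanyP.trans (fwchain_reachAny h)
  refine ⟨P, hanyP, ?_, ?_, ?_, ?_, ?_⟩
  · -- every state is below the root in the forward tree
    intro S hS
    refine Or.inr ?_
    exact Relation.ReflTransGen.mono (r := FwStep) (p := FwKStep)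
      (fun a b hab => ⟨a, b, hab.choose, KEq.refl a, KEq.refl b, hab.choose_spec⟩)
      _ _ (hreach S hS)
  · -- no forward transition into the root
    rintro ⟨S, hS, T₁, T₂, ℓ, hK1, ⟨f, rfl⟩, hfw⟩
    exact fw_not_std_target hfw ((std_rename f P).mpr hstd)
  · -- unique parent via forward transitions
    intro S hS hKne
    obtain rfl | ⟨T, hPT, ℓ, hf⟩ := (hreach S hS).cases_tail
    · exact absurd (KEq.refl _) hKne
    have hanyT : ReachAny bw R T := hanyOf T hPT
    have hnpT : noPar T := hnpAll T hanyT
    refine ⟨T, hanyT, ⟨T, S, ℓ, KEq.refl T, KEq.refl S, hf⟩, ?_⟩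
    rintro T' hT' ⟨T₁, T₂, ℓ', hK1, ⟨f, rfl⟩, hfw'⟩
    have hnpT₁ : noPar T₁ := by
      obtain ⟨g, rfl⟩ := hK1
      exact (noPar_rename g T').mpr (hnpAll T' hT')
    have hbw' : Bw bw (rename f S) (bwLab bw ℓ') T₁ := fw_bw hfw' hnpT₁
    have hbwS : Bw bw S (bwLab bw ℓ) T := fw_bw hf hnpT
    have hbwR := bw_rename f hbwS (hnpAll S hS)
    obtain ⟨-, hEq⟩ := bw_det hbw' ((noPar_rename f S).mpr (hnpAll S hS)) hbwR
    exact KEq.trans hK1 (KEq.symm ⟨f, hEq⟩)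
  · -- unique backward transition to the parent
    intro S hS hKne
    obtain rfl | ⟨T, hPT, ℓ, hf⟩ := (hreach S hS).cases_tail
    · exact absurd (KEq.refl _) hKne
    have hanyT : ReachAny bw R T := hanyOf T hPT
    have hnpT : noPar T := hnpAll T hanyT
    have hbwS : Bw bw S (bwLab bw ℓ) T := fw_bw hf hnpT
    refine ⟨T, hanyT, ⟨S, T, bwLab bw ℓ, KEq.refl S, KEq.refl T, hbwS⟩, ?_⟩
    rintro T' hT' ⟨T₁, T₂, ℓ', ⟨f, rfl⟩, hK2, hbw'⟩
    have hbwR := bw_rename f hbwS (hnpAll S hS)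
    obtain ⟨-, hEq⟩ := bw_det hbw' ((noPar_rename f S).mpr (hnpAll S hS)) hbwR
    exact KEq.trans hK2 (KEq.trans ⟨Equiv.refl ℕ, by simp [rename_id, hEq]⟩
      (KEq.symm ⟨f, rfl⟩))
  · -- loop property: forward and backward transitions match
    intro S T hS hT
    constructor
    · rintro ⟨T₁, T₂, ℓ, hK1, hK2, hfw⟩
      have hnpT₁ : noPar T₁ := by
        obtain ⟨g, rfl⟩ := hK1
        exact (noPar_rename g T).mpr (hnpAll T hT)
      exact ⟨T₂, T₁, bwLab bw ℓ, hK2, hK1, fw_bw hfw hnpT₁⟩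
    · rintro ⟨T₁, T₂, ℓ, hK1, hK2, hbw⟩
      obtain ⟨l', hf⟩ := bw_fw hbw
      exact ⟨T₂, T₁, _, hK2, hK1, hf⟩

end RMPC
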